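/- (Slab lemma, bounded-jump version of Zerner–Merkl Lemma 4.) Let 𝐏 be a probability measure on environments on ℤ^d satisfying (C1), (C2), and (C3), let ℓ be a unit vector in ℝ^d, and let a ≤ b be real numbers. Then P⁰-almost surely, if X_n · ℓ ∈ [a, b] for infinitely many n, then X_n · ℓ < a for some n and X_m · ℓ > b for some m. Equivalently, it is P⁰-a.s. impossible to visit the slab {x : a ≤ x · ℓ ≤ b} infinitely often without visiting both neighboring half-spaces. -/

import Mathlib

open MeasureTheory ProbabilityTheory Filter Topology

noncomputable section

/-- Vertices of `ℤ^d`. -/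
abbrev Zd (d : ℕ) := Fin d → ℤ

/-- Trajectories of a walk on `ℤ^d`. -/
abbrev Traj (d : ℕ) := ℕ → Zd d

/-- Embedding of `ℤ^d` into Euclidean `ℝ^d`. -/
def toE {d : ℕ} (x : Zd d) : EuclideanSpace ℝ (Fin d) := WithLp.toLp 2 (fun i => (x i : ℝ))

/-- Dot product of a lattice point with a real vector. -/
def dotl {d : ℕ} (x : Zd d) (ℓ : EuclideanSpace ℝ (Fin d)) : ℝ := ∑ i, (x i : ℝ) * ℓ i

/-- The space of environments on `ℤ^d`. -/
abbrev EnvSp (d : ℕ) :=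
  {ω : Zd d → Zd d → ℝ // (∀ x y, 0 ≤ ω x y) ∧ ∀ x, HasSum (ω x) 1}

/-- `κ x ω` is the quenched law `P_ω^x` of the walk started at `x` in the environment `ω`,
characterized by its cylinder probabilities. -/
def IsQuenched {d : ℕ} (κ : Zd d → Kernel (EnvSp d) (Traj d)) : Prop :=
  ∀ (x : Zd d) (ω : EnvSp d) (n : ℕ) (p : ℕ → Zd d),
    (κ x) ω {X | ∀ i ≤ n, X i = p i} =
      (if p 0 = x then 1 else 0) *
        ∏ i ∈ Finset.range n, ENNReal.ofReal (ω.1 (p i) (p (i + 1)))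

/-- The annealed law `P^x`. -/
def ann {d : ℕ} (P : Measure (EnvSp d)) (κ : Zd d → Kernel (EnvSp d) (Traj d))
    (x : Zd d) : Measure (Traj d) :=
  P.bind fun ω => (κ x) ω

/-- The annealed law `P^{a,b}` of two walks moving independently in a common environment. -/
def annPair {d : ℕ} (P : Measure (EnvSp d)) (κ : Zd d → Kernel (EnvSp d) (Traj d))
    (a b : Zd d) : Measure (Traj d × Traj d) :=
  P.bind fun ω => ((κ a) ω).prod ((κ b) ω)

/-- (C1): the transition probability vectors at the various sites are i.i.d. -/
def CondC1 {d : ℕ} (P : Measure (EnvSp d)) : Prop :=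
  iIndepFun
    (fun x (ω : EnvSp d) => fun y : Zd d => ω.1 x (x + y)) P ∧
  ∀ x : Zd d,
    IdentDistrib (fun ω : EnvSp d => fun y : Zd d => ω.1 x (x + y))
      (fun ω : EnvSp d => fun y : Zd d => ω.1 0 (0 + y)) P P

/-- (C2): jumps are bounded by `R`. -/
def CondC2 {d : ℕ} (P : Measure (EnvSp d)) (R : ℝ) : Prop :=
  0 < R ∧ ∀ᵐ ω ∂P, ∀ x y : Zd d, R < ‖toE x - toE y‖ → ω.1 x y = 0

/-- (C3): a generating set of steps that are a.s. available. -/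
def CondC3 {d : ℕ} (P : Measure (EnvSp d)) : Prop :=
  ∃ N : Set (Zd d), AddSubmonoid.closure N = ⊤ ∧ ∀ y ∈ N, P {ω | 0 < ω.1 0 y} = 1

/-- The event `A_ℓ` of transience in direction `ℓ`. -/
def Adir {d : ℕ} (ℓ : EuclideanSpace ℝ (Fin d)) : Set (Traj d) :=
  {X | Tendsto (fun n => dotl (X n) ℓ) atTop atTop}

/-- The event `A_{-ℓ}`. -/
def AdirNeg {d : ℕ} (ℓ : EuclideanSpace ℝ (Fin d)) : Set (Traj d) :=
  {X | Tendsto (fun n => dotl (X n) ℓ) atTop atBot}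

/-- First hitting time of a set, valued in `ℕ∞`. -/
def hitTime {α : Type*} (A : Set α) (X : ℕ → α) : ℕ∞ :=
  ⨅ (k : ℕ) (_ : X k ∈ A), (k : ℕ∞)

/-- `T_{<a}` (with respect to direction `ℓ`). -/
def Tlt {d : ℕ} (ℓ : EuclideanSpace ℝ (Fin d)) (a : ℝ) : Traj d → ℕ∞ :=
  hitTime {x | dotl x ℓ < a}

/-- `T_{≤a}`. -/
def Tle {d : ℕ} (ℓ : EuclideanSpace ℝ (Fin d)) (a : ℝ) : Traj d → ℕ∞ :=
  hitTime {x | dotl x ℓ ≤ a}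

/-- `T_{>a}`. -/
def Tgt {d : ℕ} (ℓ : EuclideanSpace ℝ (Fin d)) (a : ℝ) : Traj d → ℕ∞ :=
  hitTime {x | a < dotl x ℓ}

/-- `T_{≥a}`. -/
def Tge {d : ℕ} (ℓ : EuclideanSpace ℝ (Fin d)) (a : ℝ) : Traj d → ℕ∞ :=
  hitTime {x | a ≤ dotl x ℓ}

/-- `Y` is obtained from `X` by erasing a single loop. -/
def EraseOne {α : Type*} (X Y : ℕ → α) : Prop :=
  ∃ m n : ℕ, m < n ∧ X m = X n ∧ Y = fun i => if i < m then X i else X (i + (n - m))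

/-- `ℰ(X)`: all paths obtained from `X` by erasing finitely many loops in any order. -/
def LoopErasures {α : Type*} (X : ℕ → α) : Set (ℕ → α) :=
  {Y | Relation.ReflTransGen EraseOne X Y}

/-- The event `B_ℓ`. -/
def Bdir {d : ℕ} (ℓ : EuclideanSpace ℝ (Fin d)) : Set (Traj d) :=
  {X | ∃ Y ∈ LoopErasures X, Tlt ℓ 0 Y = ⊤}

/-- The path `X` stopped at the (possibly infinite) time `T`;
for `n ≥ T` it stays at `X_T`. -/
def stopped {α : Type*} (X : ℕ → α) (T : ℕ∞) : ℕ → α :=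
  fun n => if (n : ℕ∞) < T then X n else X T.toNat

/-- The event `G_a^b` (for `a < b` it uses `T_{≥b}`, for `a > b` it uses `T_{≤b}`). -/
def Gset {d : ℕ} (ℓ : EuclideanSpace ℝ (Fin d)) (a b : ℝ) : Set (Traj d) :=
  if a < b then
    {X | Tge ℓ b X ≠ ⊤ ∧
      ∃ Y ∈ LoopErasures (stopped X (Tge ℓ b X)), Tge ℓ b Y < Tlt ℓ a Y}
  else
    {X | Tle ℓ b X ≠ ⊤ ∧
      ∃ Y ∈ LoopErasures (stopped X (Tle ℓ b X)), Tle ℓ b Y < Tgt ℓ a Y}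


namespace SlabAux

open scoped ENNReal

variable {d : ℕ}

/-! ### Basic helpers -/

lemma dotl_add (x y : Zd d) (ℓ : EuclideanSpace ℝ (Fin d)) :
    dotl (x + y) ℓ = dotl x ℓ + dotl y ℓ := by
  unfold dotl
  rw [← Finset.sum_add_distrib]
  refine Finset.sum_congr rfl fun i _ => ?_
  push_cast [Pi.add_apply]; ring

lemma dotl_nsmul (j : ℕ) (z : Zd d) (ℓ : EuclideanSpace ℝ (Fin d)) :
    dotl (j • z) ℓ = j * dotl z ℓ := by
  induction j with
  | zero => simp [dotl]
  | succ k ih => rw [succ_nsmul, dotl_add, ih]; push_cast; ring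

lemma dotl_neg (x : Zd d) (ℓ : EuclideanSpace ℝ (Fin d)) :
    dotl x (-ℓ) = -(dotl x ℓ) := by
  simp [dotl, ← Finset.sum_neg_distrib]

lemma measurable_eval (m : ℕ) : Measurable (fun X : Traj d => X m) :=
  measurable_pi_apply (X := fun _ : ℕ => Zd d) m

lemma measurableSet_zd (s : Set (Zd d)) : MeasurableSet s := by
  have : s = ⋃ x ∈ s, {x} := by simp
  rw [this]
  refine MeasurableSet.biUnion (Set.to_countable s) (fun x _ => ?_)
  have : ({x} : Set (Zd d)) = ⋂ i : Fin d, (fun v : Zd d => v i) ⁻¹' {x i} := by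
    ext v; simp [funext_iff]
  rw [this]
  exact MeasurableSet.iInter fun i =>
    (measurable_pi_apply (X := fun _ : Fin d => ℤ) i) (MeasurableSet.singleton _)

lemma measurable_traj_rel (i n : ℕ) (φ : Zd d → Zd d) :
    MeasurableSet {X : Traj d | X i = φ (X n)} := by
  have : {X : Traj d | X i = φ (X n)} =
      ⋃ x : Zd d, ((fun X : Traj d => X n) ⁻¹' {x} ∩ (fun X : Traj d => X i) ⁻¹' {φ x}) := by
    ext X; simp
  rw [this]
  exact MeasurableSet.iUnion fun x =>
    ((measurable_eval n) (measurableSet_zd _)).inter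
      ((measurable_eval i) (measurableSet_zd _))

lemma measurable_coord (n : ℕ) (s : Set (Zd d)) :
    MeasurableSet {X : Traj d | X n ∈ s} :=
  (measurable_eval n) (measurableSet_zd s)

end SlabAux
namespace SlabAux

open scoped ENNReal

variable {d : ℕ}

/-! ### Cylinders and determined sets -/

/-- Cylinder set: trajectories agreeing with `q` up to time `n`. -/
def cylN (n : ℕ) (q : Traj d) : Set (Traj d) := {X | ∀ i ≤ n, X i = q i}

lemma measurableSet_cylN (n : ℕ) (q : Traj d) : MeasurableSet (cylN n q) := by
  have : cylN n q = ⋂ (i : ℕ) (_ : i ≤ n), {X : Traj d | X i ∈ ({q i} : Set (Zd d))} := by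
    ext X; simp [cylN]
  rw [this]
  exact MeasurableSet.iInter fun i => MeasurableSet.iInter fun _ => measurable_coord i _

/-- The success event: after time `n` the walk makes `K` consecutive `z`-steps. -/
def SuccP (z : Zd d) (K n : ℕ) (X : Traj d) : Prop :=
  ∀ j, 1 ≤ j → j ≤ K → X (n + j) = X n + j • z

lemma measurableSet_succ (z : Zd d) (K n : ℕ) :
    MeasurableSet {X : Traj d | SuccP z K n X} := by
  have : {X : Traj d | SuccP z K n X} =
      ⋂ (j : ℕ) (_ : 1 ≤ j) (_ : j ≤ K), {X : Traj d | X (n + j) = (fun v => v + j • z) (X n)} := by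
    ext X; simp [SuccP]
  rw [this]
  exact MeasurableSet.iInter fun j => MeasurableSet.iInter fun _ =>
    MeasurableSet.iInter fun _ => measurable_traj_rel (n + j) n (fun v => v + j • z)

/-- Extension of a path by a ray of `z`-steps after time `n`. -/
def rayExt (z : Zd d) (n : ℕ) (q : Traj d) : Traj d :=
  fun i => if i ≤ n then q i else q n + (i - n) • z

lemma cylN_inter_succ (z : Zd d) (K n : ℕ) (q : Traj d) :
    cylN n q ∩ {X | SuccP z K n X} = cylN (n + K) (rayExt z n q) := by
  ext X
  constructor
  · rintro ⟨h1, h2⟩ i hi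
    by_cases hin : i ≤ n
    · rw [h1 i hin, rayExt, if_pos hin]
    · push_neg at hin
      have hj1 : 1 ≤ i - n := by omega
      have hj2 : i - n ≤ K := by omega
      have := h2 (i - n) hj1 hj2
      rw [show n + (i - n) = i by omega] at this
      rw [this, h1 n (le_refl n), rayExt, if_neg (by omega)]
  · intro h
    have h1 : ∀ i ≤ n, X i = q i := fun i hi => by
      have := h i (le_trans hi (Nat.le_add_right n K))
      rwa [rayExt, if_pos hi] at this
    refine ⟨h1, fun j hj1 hj2 => ?_⟩
    have := h (n + j) (by omega)
    rw [rayExt, if_neg (by omega)] at this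
    rw [this, show n + j - n = j by omega, h1 n (le_refl n)]

/-- `C` is determined by coordinates up to time `n`. -/
def Det (n : ℕ) (C : Set (Traj d)) : Prop :=
  ∀ X Y : Traj d, (∀ i ≤ n, X i = Y i) → X ∈ C → Y ∈ C

/-- Canonical representative: freeze the path after time `n`. -/
def canon (n : ℕ) (X : Traj d) : Traj d := fun i => if i ≤ n then X i else X n

def reps (n : ℕ) (C : Set (Traj d)) : Set (Traj d) := {q ∈ C | canon n q = q}

lemma canon_agree (n : ℕ) (X : Traj d) : ∀ i ≤ n, X i = canon n X i :=
  fun i hi => by rw [canon, if_pos hi]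

lemma reps_countable (n : ℕ) (C : Set (Traj d)) : (reps n C).Countable := by
  have : reps n C ⊆ Set.range (fun v : Fin (n+1) → Zd d =>
      (fun i => if h : i ≤ n then v ⟨i, Nat.lt_succ_of_le h⟩ else v ⟨n, Nat.lt_succ_self n⟩ :
        Traj d)) := by
    rintro q ⟨_, hq⟩
    refine ⟨fun i => q i, ?_⟩
    funext i
    by_cases h : i ≤ n
    · simp [h]
    · simp only [dif_neg h]
      conv_rhs => rw [← hq]
      rw [canon, if_neg h]
  exact Set.Countable.mono this (Set.countable_range _)

lemma reps_disjoint (n : ℕ) (C : Set (Traj d)) :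
    (reps n C).PairwiseDisjoint (cylN n) := by
  rintro q ⟨_, hq⟩ q' ⟨_, hq'⟩ hne
  refine Set.disjoint_left.2 fun X hX hX' => hne ?_
  funext i
  by_cases h : i ≤ n
  · rw [← hX i h, ← hX' i h]
  · conv_lhs => rw [← hq]
    conv_rhs => rw [← hq']
    rw [canon, if_neg h, canon, if_neg h, ← hX n (le_refl n), ← hX' n (le_refl n)]

lemma det_decomp {n : ℕ} {C : Set (Traj d)} (hdet : Det n C) :
    C = ⋃ q ∈ reps n C, cylN n q := by
  ext X
  constructor
  · intro hX
    refine Set.mem_biUnion (show canon n X ∈ reps n C from ⟨hdet X _ (canon_agree n X) hX, ?_⟩)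
      (fun i hi => (canon_agree n X i hi))
    funext i
    by_cases h : i ≤ n
    · simp [canon, h]
    · simp [canon, h]
  · rintro hX
    obtain ⟨q, hq, hXq⟩ := Set.mem_iUnion₂.1 hX
    exact hdet q X (fun i hi => (hXq i hi).symm) hq.1

lemma det_measurable {n : ℕ} {C : Set (Traj d)} (hdet : Det n C) : MeasurableSet C := by
  rw [det_decomp hdet]
  exact MeasurableSet.biUnion (reps_countable n C) fun q _ => measurableSet_cylN n q

/-- Key single-trial estimate: if each good cylinder extends by the ray with relative
probability `e`, then removing the success event scales the measure by `1 - e`. -/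
lemma lemA {μ : Measure (Traj d)} (hμ1 : ∀ s, μ s ≤ 1) {n : ℕ} {C : Set (Traj d)}
    (hdet : Det n C) {z : Zd d} {K : ℕ} {e : ℝ≥0∞}
    (hq : ∀ q ∈ reps n C, μ (cylN (n + K) (rayExt z n q)) = e * μ (cylN n q)) :
    μ (C \ {X | SuccP z K n X}) = (1 - e) * μ C := by
  have hdec := det_decomp hdet
  have hcyl_diff : ∀ q ∈ reps n C,
      μ (cylN n q \ {X | SuccP z K n X}) = (1 - e) * μ (cylN n q) := by
    intro q hqr
    have h1 : cylN n q \ {X | SuccP z K n X} = cylN n q \ (cylN n q ∩ {X | SuccP z K n X}) :=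
      (Set.diff_self_inter).symm
    rw [h1, measure_diff Set.inter_subset_left
        (((measurableSet_cylN n q).inter (measurableSet_succ z K n)).nullMeasurableSet)
        (ne_top_of_le_ne_top ENNReal.one_ne_top (hμ1 _)),
      cylN_inter_succ, hq q hqr]
    have hfin : μ (cylN n q) ≠ ∞ := ne_top_of_le_ne_top ENNReal.one_ne_top (hμ1 _)
    rw [ENNReal.sub_mul (fun _ _ => hfin), one_mul]
  have hdiff : C \ {X | SuccP z K n X} = ⋃ q ∈ reps n C, (cylN n q \ {X | SuccP z K n X}) := by
    conv_lhs => rw [hdec]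
    simp only [Set.biUnion_eq_iUnion, Set.iUnion_diff]
  have h1 : μ (C \ {X | SuccP z K n X}) = ∑' q : reps n C, μ (cylN n ↑q \ {X | SuccP z K n X}) := by
    rw [hdiff]
    exact measure_biUnion (reps_countable n C)
      ((reps_disjoint n C).mono_on (fun q _ => Set.diff_subset))
      (fun q hqr => (measurableSet_cylN n q).diff (measurableSet_succ z K n))
  have h2 : μ C = ∑' q : reps n C, μ (cylN n ↑q) := by
    conv_lhs => rw [hdec]
    exact measure_biUnion (reps_countable n C) (reps_disjoint n C)
      (fun q _ => measurableSet_cylN n q)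
  rw [h1, h2, ← ENNReal.tsum_mul_left]
  exact tsum_congr fun q => hcyl_diff q q.2

end SlabAux
namespace SlabAux

open scoped ENNReal

variable {d : ℕ}

/-! ### Trial times and the abstract trial-failure lemma -/

variable (G : ℕ → Traj d → Prop) (K : ℕ)

/-- The `k`-th trial time (`K`-separated times where `G` holds). -/
def tri : ℕ → Traj d → ℕ
  | 0, X => sInf {n | G n X}
  | k+1, X => sInf {n | tri k X + K ≤ n ∧ G n X}

/-- The `k`-th trial time exists. -/
def hasT : ℕ → Traj d → Prop
  | 0, X => ∃ n, G n X
  | k+1, X => hasT k X ∧ ∃ n, tri G K k X + K ≤ n ∧ G n X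

variable {G K}

lemma hasT_mono {k : ℕ} {X : Traj d} (h : hasT G K (k+1) X) : hasT G K k X := h.1

lemma hasT_le {k k' : ℕ} (hk : k ≤ k') {X : Traj d} (h : hasT G K k' X) : hasT G K k X := by
  induction k' with
  | zero => exact Nat.le_zero.1 hk ▸ h
  | succ m ih =>
    rcases Nat.lt_succ_iff_lt_or_eq.1 (Nat.lt_succ_of_le hk) with h' | h'
    · exact ih (by omega) h.1
    · exact h' ▸ h

lemma tri_spec0 {X : Traj d} (h : hasT G K 0 X) : G (tri G K 0 X) X :=
  Nat.sInf_mem h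

lemma tri_specS {k : ℕ} {X : Traj d} (h : hasT G K (k+1) X) :
    tri G K k X + K ≤ tri G K (k+1) X ∧ G (tri G K (k+1) X) X :=
  Nat.sInf_mem h.2

lemma tri_G {k : ℕ} {X : Traj d} (h : hasT G K k X) : G (tri G K k X) X := by
  cases k with
  | zero => exact tri_spec0 h
  | succ m => exact (tri_specS h).2

lemma tri_mono {i k : ℕ} (hik : i ≤ k) {X : Traj d} (h : hasT G K k X) :
    tri G K i X ≤ tri G K k X := by
  induction k with
  | zero => simp_all
  | succ m ih =>
    rcases Nat.lt_succ_iff_lt_or_eq.1 (Nat.lt_succ_of_le hik) with h' | h'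
    · exact le_trans (ih (by omega) h.1) (le_trans (Nat.le_add_right _ K) (tri_specS h).1)
    · exact h' ▸ le_refl _

lemma tri_add_K_le {i k : ℕ} (hik : i ≤ k) {X : Traj d} (h : hasT G K (k+1) X) :
    tri G K i X + K ≤ tri G K (k+1) X := by
  calc tri G K i X + K ≤ tri G K k X + K := by
        have := tri_mono hik (hasT_mono h); omega
    _ ≤ tri G K (k+1) X := (tri_specS h).1

/-- Determinedness transport for trial times. -/
lemma tri_det (hGdet : ∀ n (X Y : Traj d), (∀ i ≤ n, X i = Y i) → G n X → G n Y) :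
    ∀ (k : ℕ) (X Y : Traj d) (n' : ℕ), (∀ i ≤ n', X i = Y i) →
      hasT G K k X → tri G K k X ≤ n' → hasT G K k Y ∧ tri G K k Y = tri G K k X := by
  intro k
  induction k with
  | zero =>
    intro X Y n' hagree h0 hle
    have hGX := tri_spec0 h0
    have hGY : G (tri G K 0 X) Y :=
      hGdet _ X Y (fun i hi => hagree i (le_trans hi hle)) hGX
    have hY0 : hasT G K 0 Y := ⟨_, hGY⟩
    refine ⟨hY0, le_antisymm (Nat.sInf_le hGY) ?_⟩
    have hmem := Nat.sInf_mem (hY0 : ∃ n, G n Y)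
    set s := sInf {n | G n Y} with hs
    by_contra hlt
    push_neg at hlt
    have hsX : G s X := hGdet s Y X
      (fun i hi => (hagree i (le_trans hi (le_trans (le_of_lt hlt) hle))).symm) hmem
    have hle2 : tri G K 0 X ≤ s := Nat.sInf_le hsX
    have htriY : tri G K 0 Y = s := rfl
    omega
  | succ m ih =>
    intro X Y n' hagree h1 hle
    have hstep := tri_specS h1
    have hprev_le : tri G K m X ≤ n' := by omega
    obtain ⟨hTYm, hTrim⟩ := ih X Y n' hagree h1.1 hprev_le
    have hGX := hstep.2
    have hGY : G (tri G K (m+1) X) Y :=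
      hGdet _ X Y (fun i hi => hagree i (le_trans hi hle)) hGX
    have hmemY : tri G K m Y + K ≤ tri G K (m+1) X ∧ G (tri G K (m+1) X) Y := by
      rw [hTrim]; exact ⟨hstep.1, hGY⟩
    have hY1 : hasT G K (m+1) Y := ⟨hTYm, ⟨_, hmemY⟩⟩
    refine ⟨hY1, le_antisymm (Nat.sInf_le hmemY) ?_⟩
    have hmem := Nat.sInf_mem hY1.2
    set s := sInf {n | tri G K m Y + K ≤ n ∧ G n Y} with hs
    by_contra hlt
    push_neg at hlt
    have hsn' : s ≤ n' := le_trans (le_of_lt hlt) hle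
    have hsX : tri G K m X + K ≤ s ∧ G s X := by
      constructor
      · rw [← hTrim]; exact hmem.1
      · exact hGdet s Y X (fun i hi => (hagree i (le_trans hi hsn')).symm) hmem.2
    have hle2 : tri G K (m+1) X ≤ s := Nat.sInf_le hsX
    have htriY : tri G K (m+1) Y = s := by rw [hs]; rfl
    omega

lemma succ_det {z : Zd d} {m : ℕ} {X Y : Traj d} (hagree : ∀ i ≤ m + K, X i = Y i)
    (h : SuccP z K m X) : SuccP z K m Y := by
  intro j hj1 hj2
  rw [← hagree (m + j) (by omega), ← hagree m (by omega)]
  exact h j hj1 hj2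

variable (G K) in
/-- The event: the first `k` trials (indices `1..k`) all exist and all fail. -/
def Vset (z : Zd d) (k : ℕ) : Set (Traj d) :=
  {X | hasT G K k X ∧ ∀ i, 1 ≤ i → i ≤ k → ¬ SuccP z K (tri G K i X) X}

variable (G K) in
/-- Decomposition piece: trial `k+1` happens exactly at time `n`. -/
def Cset (z : Zd d) (k n : ℕ) : Set (Traj d) :=
  {X | hasT G K (k+1) X ∧ tri G K (k+1) X = n ∧
    ∀ i, 1 ≤ i → i ≤ k → ¬ SuccP z K (tri G K i X) X}

lemma Vset_succ_eq (z : Zd d) (k : ℕ) :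
    Vset G K z (k+1) = ⋃ n, (Cset G K z k n \ {X | SuccP z K n X}) := by
  ext X
  simp only [Vset, Cset, Set.mem_iUnion, Set.mem_diff, Set.mem_setOf_eq]
  constructor
  · rintro ⟨h1, h2⟩
    exact ⟨tri G K (k+1) X, ⟨h1, rfl, fun i hi1 hi2 => h2 i hi1 (by omega)⟩,
      h2 (k+1) (by omega) (le_refl _)⟩
  · rintro ⟨n, ⟨h1, hn, h2⟩, h3⟩
    refine ⟨h1, fun i hi1 hi2 => ?_⟩
    rcases Nat.lt_succ_iff_lt_or_eq.1 (Nat.lt_succ_of_le hi2) with h' | h'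
    · exact h2 i hi1 (by omega)
    · rw [h', hn]; exact h3

lemma Cset_det (hGdet : ∀ n (X Y : Traj d), (∀ i ≤ n, X i = Y i) → G n X → G n Y)
    (z : Zd d) (k n : ℕ) : Det n (Cset G K z k n) := by
  rintro X Y hagree ⟨h1, hn, h2⟩
  have h1' := tri_det hGdet (k+1) X Y n hagree h1 (le_of_eq hn)
  refine ⟨h1'.1, h1'.2.trans hn, fun i hi1 hi2 => ?_⟩
  have hiK : tri G K i X + K ≤ n := hn ▸ tri_add_K_le hi2 h1
  have htiX : tri G K i X ≤ n := by omega
  have hi' := tri_det hGdet i X Y n hagree (hasT_le (by omega) h1) htiX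
  rw [hi'.2]
  intro hsucc
  exact h2 i hi1 hi2 (succ_det (fun j hj => (hagree j (by omega)).symm) hsucc)

lemma Cset_subset_G (z : Zd d) (k n : ℕ) :
    ∀ q ∈ Cset G K z k n, G n q := by
  rintro q ⟨h1, hn, _⟩
  exact hn ▸ tri_G h1

lemma Cset_disjoint (z : Zd d) (k : ℕ) :
    Pairwise (Function.onFun Disjoint (fun n => Cset G K z k n \ {X | SuccP z K n X})) := by
  intro m m' hne
  refine Set.disjoint_left.2 ?_
  rintro X ⟨⟨_, hm, _⟩, _⟩ ⟨⟨_, hm', _⟩, _⟩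
  exact hne (hm ▸ hm'.symm ▸ rfl)

lemma Cset_union_subset_V (z : Zd d) (k : ℕ) :
    (⋃ n, Cset G K z k n) ⊆ Vset G K z k := by
  rintro X hX
  obtain ⟨n, h1, _, h2⟩ := Set.mem_iUnion.1 hX
  exact ⟨hasT_mono h1, h2⟩

/-- Abstract lemma: if `G`-times occur infinitely often but each trial (which succeeds
with conditional probability `e > 0` on fresh cylinders) always fails, the event is null. -/
lemma absBC (μ : Measure (Traj d)) (hμ1 : ∀ s, μ s ≤ 1)
    (hGdet : ∀ n (X Y : Traj d), (∀ i ≤ n, X i = Y i) → G n X → G n Y)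
    (z : Zd d) (e : ℝ≥0∞) (he0 : e ≠ 0)
    (hkey : ∀ n (q : Traj d), G n q → μ (cylN (n + K) (rayExt z n q)) = e * μ (cylN n q)) :
    μ {X | (∀ m, ∃ n, m ≤ n ∧ G n X) ∧ ∀ n, G n X → ¬ SuccP z K n X} = 0 := by
  set TS := {X | (∀ m, ∃ n, m ≤ n ∧ G n X) ∧ ∀ n, G n X → ¬ SuccP z K n X} with hTS
  -- TS is contained in every Vset
  have hTSV : ∀ k, TS ⊆ Vset G K z k := by
    intro k
    rintro X ⟨hio, hfail⟩
    have hhas : ∀ j, hasT G K j X := by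
      intro j
      induction j with
      | zero => obtain ⟨n, _, hn⟩ := hio 0; exact ⟨n, hn⟩
      | succ m ihm =>
        obtain ⟨n, hn1, hn2⟩ := hio (tri G K m X + K)
        exact ⟨ihm, n, hn1, hn2⟩
    exact ⟨hhas k, fun i _ _ => hfail _ (tri_G (hhas i))⟩
  -- inductive bound
  have hV : ∀ k, μ (Vset G K z k) ≤ (1 - e) ^ k := by
    intro k
    induction k with
    | zero => simpa using le_trans (measure_mono (Set.subset_univ _)) (hμ1 Set.univ)
    | succ k ih =>
      rw [Vset_succ_eq, measure_iUnion (Cset_disjoint z k)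
        (fun n => (det_measurable (Cset_det hGdet z k n)).diff (measurableSet_succ z K n))]
      have hterm : ∀ n, μ (Cset G K z k n \ {X | SuccP z K n X})
          = (1 - e) * μ (Cset G K z k n) := by
        intro n
        refine lemA hμ1 (Cset_det hGdet z k n) (fun q hq => ?_)
        exact hkey n q (Cset_subset_G z k n q hq.1)
      calc ∑' n, μ (Cset G K z k n \ {X | SuccP z K n X})
          = ∑' n, (1 - e) * μ (Cset G K z k n) := tsum_congr hterm
        _ = (1 - e) * ∑' n, μ (Cset G K z k n) := ENNReal.tsum_mul_left
        _ = (1 - e) * μ (⋃ n, Cset G K z k n) := by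
            rw [measure_iUnion ?_ (fun n => det_measurable (Cset_det hGdet z k n))]
            intro m m' hne
            refine Set.disjoint_left.2 ?_
            rintro X ⟨_, hm, _⟩ ⟨_, hm', _⟩
            exact hne (hm ▸ hm'.symm ▸ rfl)
        _ ≤ (1 - e) * μ (Vset G K z k) :=
            mul_le_mul_right (measure_mono (Cset_union_subset_V z k)) _
        _ ≤ (1 - e) * (1 - e) ^ k := mul_le_mul_right ih _
        _ = (1 - e) ^ (k + 1) := (pow_succ (1 - e) k).symm ▸ (mul_comm _ _)
  -- conclude
  have hr : (1 - e) < 1 := ENNReal.sub_lt_self ENNReal.one_ne_top one_ne_zero he0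
  have hlim : Filter.Tendsto (fun k => (1 - e) ^ k) Filter.atTop (nhds 0) :=
    ENNReal.tendsto_pow_atTop_nhds_zero_of_lt_one hr
  have : μ TS ≤ 0 :=
    ge_of_tendsto' hlim (fun k => le_trans (measure_mono (hTSV k)) (hV k))
  exact le_antisymm this (zero_le)

end SlabAux
namespace SlabAux

open scoped ENNReal

variable {d : ℕ}

/-! ### Annealed cylinder probabilities and the independence factorization -/

lemma measurable_fam (x : Zd d) :
    Measurable (fun ω : EnvSp d => (fun y : Zd d => ω.1 x (x + y))) := by
  refine measurable_pi_lambda _ (fun y => ?_)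
  exact ((measurable_pi_apply (X := fun _ : Zd d => ℝ) (x + y)).comp
    ((measurable_pi_apply (X := fun _ : Zd d => Zd d → ℝ) x).comp measurable_subtype_coe))

lemma measurable_entry (u v : Zd d) :
    Measurable (fun ω : EnvSp d => ENNReal.ofReal (ω.1 u v)) := by
  refine ENNReal.measurable_ofReal.comp ?_
  exact ((measurable_pi_apply (X := fun _ : Zd d => ℝ) v).comp
    ((measurable_pi_apply (X := fun _ : Zd d => Zd d → ℝ) u).comp measurable_subtype_coe))

lemma entry_le_one (ω : EnvSp d) (u v : Zd d) : ω.1 u v ≤ 1 :=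
  le_hasSum (ω.2.2 u) v (fun y _ => ω.2.1 u y)

variable (P : Measure (EnvSp d)) [IsProbabilityMeasure P]
variable (κ : Zd d → Kernel (EnvSp d) (Traj d)) [∀ x, IsMarkovKernel (κ x)]

lemma ann_cylN (hκ : IsQuenched κ) (n : ℕ) (q : Traj d) :
    ann P κ 0 (cylN n q) =
      (if q 0 = 0 then 1 else 0) *
        ∫⁻ ω, ∏ i ∈ Finset.range n, ENNReal.ofReal (ω.1 (q i) (q (i + 1))) ∂P := by
  rw [ann, Measure.bind_apply (measurableSet_cylN n q) ((κ 0).measurable.aemeasurable)]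
  have : ∀ ω : EnvSp d, (κ 0) ω (cylN n q) =
      (if q 0 = 0 then 1 else 0) *
        ∏ i ∈ Finset.range n, ENNReal.ofReal (ω.1 (q i) (q (i + 1))) := by
    intro ω
    exact hκ 0 ω n q
  rw [lintegral_congr this,
    lintegral_const_mul _ (Finset.measurable_prod _ fun i _ => measurable_entry _ _)]

/-- Peeling off one step at a fresh site, using (C1). -/
lemma lintegral_peel (hC1 : CondC1 P) (p : ℕ → Zd d) (m : ℕ)
    (hfresh : ∀ i < m, p i ≠ p m) :
    ∫⁻ ω : EnvSp d, ∏ i ∈ Finset.range (m + 1), ENNReal.ofReal (ω.1 (p i) (p (i + 1))) ∂P =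
      (∫⁻ ω, ∏ i ∈ Finset.range m, ENNReal.ofReal (ω.1 (p i) (p (i + 1))) ∂P) *
        ∫⁻ ω, ENNReal.ofReal (ω.1 (p m) (p (m + 1))) ∂P := by
  classical
  set fam := fun (x : Zd d) (ω : EnvSp d) => (fun y : Zd d => ω.1 x (x + y)) with hfam
  set S : Finset (Zd d) := (Finset.range m).image p with hS
  set T : Finset (Zd d) := {p m} with hT
  have hST : Disjoint S T := by
    rw [Finset.disjoint_right]
    intro x hxT hxS
    rw [hT, Finset.mem_singleton] at hxT
    obtain ⟨i, hi, hpi⟩ := Finset.mem_image.1 hxS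
    exact hfresh i (Finset.mem_range.1 hi) (by rw [hpi, hxT])
  have hIndep := hC1.1.indepFun_finset S T hST (fun x => measurable_fam x)
  set g : (S → (Zd d → ℝ)) → ℝ≥0∞ := fun v =>
    ∏ i ∈ Finset.range m,
      ENNReal.ofReal ((if h : p i ∈ S then v ⟨p i, h⟩ else 0) (p (i + 1) - p i)) with hg
  have hmemT : p m ∈ T := Finset.mem_singleton_self _
  set h : (T → (Zd d → ℝ)) → ℝ≥0∞ := fun v =>
    ENNReal.ofReal (v ⟨p m, hmemT⟩ (p (m + 1) - p m)) with hh
  have hgmeas : Measurable g := by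
    refine Finset.measurable_prod _ (fun i _ => ?_)
    refine ENNReal.measurable_ofReal.comp ?_
    by_cases hmem : p i ∈ S
    · simp only [dif_pos hmem]
      exact (measurable_pi_apply (X := fun _ : Zd d => ℝ) _).comp
        (measurable_pi_apply (X := fun _ : (S : Set (Zd d)) => Zd d → ℝ) _)
    · simp only [dif_neg hmem]
      exact measurable_const
  have hhmeas : Measurable h :=
    ENNReal.measurable_ofReal.comp
      ((measurable_pi_apply (X := fun _ : Zd d => ℝ) _).comp
        (measurable_pi_apply (X := fun _ : (T : Set (Zd d)) => Zd d → ℝ) _))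
  have hcomp := (hIndep.comp hgmeas hhmeas :
    IndepFun (g ∘ fun ω (i : S) => fam i ω) (h ∘ fun ω (i : T) => fam i ω) P)
  have hgid : (g ∘ fun ω (i : S) => fam i ω) =
      fun ω => ∏ i ∈ Finset.range m, ENNReal.ofReal (ω.1 (p i) (p (i + 1))) := by
    funext ω
    refine Finset.prod_congr rfl (fun i hi => ?_)
    have hmem : p i ∈ S := Finset.mem_image_of_mem p hi
    simp only [Function.comp_apply, dif_pos hmem, hfam]
    congr 1
    rw [show p i + (p (i + 1) - p i) = p (i + 1) by abel]
  have hhid : (h ∘ fun ω (i : T) => fam i ω) =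
      fun ω => ENNReal.ofReal (ω.1 (p m) (p (m + 1))) := by
    funext ω
    simp only [Function.comp_apply, hh, hfam]
    congr 1
    rw [show p m + (p (m + 1) - p m) = p (m + 1) by abel]
  rw [hgid, hhid] at hcomp
  simp only [Finset.prod_range_succ]
  exact lintegral_mul_eq_lintegral_mul_lintegral_of_indepFun''
    (Finset.measurable_prod _ (fun i _ => measurable_entry _ _)).aemeasurable
    (measurable_entry _ _).aemeasurable hcomp

/-- The annealed one-step probability in direction `z`. -/
def eps (P : Measure (EnvSp d)) (z : Zd d) : ℝ≥0∞ :=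
  ∫⁻ ω : EnvSp d, ENNReal.ofReal (ω.1 0 ((0 : Zd d) + z)) ∂P

lemma lint_step_eq (hC1 : CondC1 P) (y z : Zd d) :
    ∫⁻ ω : EnvSp d, ENNReal.ofReal (ω.1 y (y + z)) ∂P = eps P z := by
  have hφ : Measurable (fun v : Zd d → ℝ => ENNReal.ofReal (v z)) :=
    ENNReal.measurable_ofReal.comp (measurable_pi_apply (X := fun _ : Zd d => ℝ) z)
  exact ((hC1.2 y).comp hφ).lintegral_eq

lemma eps_le_one : eps P z ≤ 1 := by
  have : ∀ ω : EnvSp d, ENNReal.ofReal (ω.1 0 ((0 : Zd d) + z)) ≤ 1 := fun ω =>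
    ENNReal.ofReal_le_one.2 (entry_le_one ω _ _)
  calc eps P z ≤ ∫⁻ _, 1 ∂P := lintegral_mono this
    _ = 1 := by simp

lemma eps_pos (z : Zd d) (hz : P {ω : EnvSp d | 0 < ω.1 0 z} = 1) : eps P z ≠ 0 := by
  intro h0
  have hmeas : Measurable (fun ω : EnvSp d => ENNReal.ofReal (ω.1 0 ((0 : Zd d) + z))) :=
    measurable_entry _ _
  rw [eps, lintegral_eq_zero_iff hmeas] at h0
  have hpos : ∀ᵐ ω ∂P, 0 < ω.1 0 z := by
    rw [MeasureTheory.ae_iff]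
    have hms : MeasurableSet {ω : EnvSp d | 0 < ω.1 0 z} := by
      refine measurableSet_lt measurable_const ?_
      exact ((measurable_pi_apply (X := fun _ : Zd d => ℝ) z).comp
        ((measurable_pi_apply (X := fun _ : Zd d => Zd d → ℝ) 0).comp measurable_subtype_coe))
    have hc : P {ω : EnvSp d | 0 < ω.1 0 z}ᶜ = 0 := by
      rw [measure_compl hms (measure_ne_top P _), hz]
      simp
    rw [show {a : EnvSp d | ¬ 0 < a.1 0 z} = {ω : EnvSp d | 0 < ω.1 0 z}ᶜ from by ext; simp]
    exact hc
  have hbad := h0.and hpos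
  obtain ⟨ω, hω1, hω2⟩ := hbad.exists
  rw [zero_add] at hω1
  simp only [Pi.zero_apply] at hω1
  exact absurd hω1 (ne_of_gt (ENNReal.ofReal_pos.2 hω2))

/-- Factorization of the annealed weight of a path extended by a fresh ray. -/
lemma lintegral_ray (hC1 : CondC1 P) (p : ℕ → Zd d) (n : ℕ) (z : Zd d) (K : ℕ)
    (hstep : ∀ j < K, p (n + j + 1) = p (n + j) + z)
    (hfresh : ∀ j < K, ∀ i < n + j, p i ≠ p (n + j)) :
    ∫⁻ ω : EnvSp d, ∏ i ∈ Finset.range (n + K), ENNReal.ofReal (ω.1 (p i) (p (i + 1))) ∂P =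
      (∫⁻ ω, ∏ i ∈ Finset.range n, ENNReal.ofReal (ω.1 (p i) (p (i + 1))) ∂P) * (eps P z) ^ K := by
  induction K with
  | zero => simp
  | succ K ih =>
    have h1 : n + (K + 1) = (n + K) + 1 := by omega
    rw [h1, lintegral_peel P hC1 p (n + K) (hfresh K (by omega)),
      ih (fun j hj => hstep j (by omega)) (fun j hj => hfresh j (by omega))]
    have h2 : ∫⁻ ω : EnvSp d, ENNReal.ofReal (ω.1 (p (n + K)) (p (n + K + 1))) ∂P = eps P z := by
      rw [hstep K (by omega)]
      exact lint_step_eq P hC1 _ z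
    rw [h2, pow_succ, mul_assoc]

end SlabAux
namespace SlabAux

open scoped ENNReal

set_option linter.unusedSectionVars false

variable {d : ℕ}

/-! ### The good predicate and the key estimates -/

/-- Good times: currently at a fresh site with level at most `b'`, with the descent ray
through sites never visited before. -/
def GoodD (ℓ : EuclideanSpace ℝ (Fin d)) (b' : ℝ) (z : Zd d) (K : ℕ) (n : ℕ) (X : Traj d) :
    Prop :=
  dotl (X n) ℓ ≤ b' ∧ (∀ i < n, X i ≠ X n) ∧
    ∀ j, 1 ≤ j → j ≤ K → ∀ i < n, X i ≠ X n + j • z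

lemma GoodD_det (ℓ : EuclideanSpace ℝ (Fin d)) (b' : ℝ) (z : Zd d) (K : ℕ) :
    ∀ n (X Y : Traj d), (∀ i ≤ n, X i = Y i) → GoodD ℓ b' z K n X → GoodD ℓ b' z K n Y := by
  rintro n X Y hag ⟨h1, h2, h3⟩
  have hn := hag n (le_refl n)
  refine ⟨hn ▸ h1, fun i hi => ?_, fun j hj1 hj2 i hi => ?_⟩
  · rw [← hag i (le_of_lt hi), ← hn]; exact h2 i hi
  · rw [← hag i (le_of_lt hi), ← hn]; exact h3 j hj1 hj2 i hi

lemma GoodD_meas (ℓ : EuclideanSpace ℝ (Fin d)) (b' : ℝ) (z : Zd d) (K : ℕ) (n : ℕ) :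
    MeasurableSet {X : Traj d | GoodD ℓ b' z K n X} := by
  have h1 : {X : Traj d | GoodD ℓ b' z K n X} =
      {X : Traj d | X n ∈ {x : Zd d | dotl x ℓ ≤ b'}} ∩
      ((⋂ (i : ℕ) (_ : i < n), {X : Traj d | X i = (fun v => v) (X n)}ᶜ) ∩
       (⋂ (j : ℕ) (_ : 1 ≤ j) (_ : j ≤ K) (i : ℕ) (_ : i < n),
         {X : Traj d | X i = (fun v => v + j • z) (X n)}ᶜ)) := by
    ext X
    simp only [GoodD, Set.mem_inter_iff, Set.mem_setOf_eq, Set.mem_iInter, Set.mem_compl_iff]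
    try tauto
  rw [h1]
  refine (measurable_coord n _).inter (MeasurableSet.inter ?_ ?_)
  · exact MeasurableSet.iInter fun i => MeasurableSet.iInter fun _ =>
      (measurable_traj_rel i n (fun v => v)).compl
  · exact MeasurableSet.iInter fun j => MeasurableSet.iInter fun _ =>
      MeasurableSet.iInter fun _ => MeasurableSet.iInter fun i =>
      MeasurableSet.iInter fun _ => (measurable_traj_rel i n (fun v => v + j • z)).compl

lemma rayExt_at (z : Zd d) (n : ℕ) (q : Traj d) (j : ℕ) :
    rayExt z n q (n + j) = q n + j • z := by
  rcases Nat.eq_zero_or_pos j with hj | hj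
  · subst hj; simp [rayExt]
  · rw [rayExt, if_neg (by omega), show n + j - n = j by omega]

lemma rayExt_agree (z : Zd d) (n : ℕ) (q : Traj d) : ∀ i ≤ n, rayExt z n q i = q i :=
  fun i hi => by rw [rayExt, if_pos hi]

lemma nsmul_inj_of_dot_ne {z : Zd d} {ℓ : EuclideanSpace ℝ (Fin d)} (hz : dotl z ℓ < 0)
    {j j' : ℕ} (h : j • z = j' • z) : j = j' := by
  have h2 : (j : ℝ) * dotl z ℓ = (j' : ℝ) * dotl z ℓ := by
    have := congrArg (fun v => dotl v ℓ) h
    simpa only [dotl_nsmul] using this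
  have h3 := mul_right_cancel₀ (ne_of_lt hz) h2
  exact_mod_cast h3

variable (P : Measure (EnvSp d)) [IsProbabilityMeasure P]
variable (κ : Zd d → Kernel (EnvSp d) (Traj d)) [∀ x, IsMarkovKernel (κ x)]

/-- The key annealed estimate at good times. -/
lemma hkey_ann (hκ : IsQuenched κ) (hC1 : CondC1 P) (ℓ : EuclideanSpace ℝ (Fin d)) (b' : ℝ)
    (z : Zd d) (hz : dotl z ℓ < 0) (K : ℕ) :
    ∀ n (q : Traj d), GoodD ℓ b' z K n q →
      ann P κ 0 (cylN (n + K) (rayExt z n q)) = (eps P z) ^ K * ann P κ 0 (cylN n q) := by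
  intro n q hG
  rw [ann_cylN P κ hκ (n + K) _, ann_cylN P κ hκ n q, rayExt_agree z n q 0 (Nat.zero_le n)]
  by_cases hq0 : q 0 = 0
  swap
  · simp [hq0]
  have hstep : ∀ j < K, rayExt z n q (n + j + 1) = rayExt z n q (n + j) + z := by
    intro j hj
    rw [show n + j + 1 = n + (j + 1) by omega, rayExt_at z n q (j + 1), rayExt_at z n q j,
      succ_nsmul, add_assoc]
  have hfresh : ∀ j < K, ∀ i < n + j, rayExt z n q i ≠ rayExt z n q (n + j) := by
    intro j hj i hi
    rw [rayExt_at z n q j]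
    by_cases hin : i < n
    · rw [rayExt_agree z n q i (by omega)]
      rcases Nat.eq_zero_or_pos j with hj0 | hj0
      · subst hj0; simpa using hG.2.1 i hin
      · exact hG.2.2 j hj0 (le_of_lt hj) i hin
    · push_neg at hin
      rw [show i = n + (i - n) by omega, rayExt_at z n q (i - n)]
      intro heq
      have h2 := add_left_cancel heq
      have := nsmul_inj_of_dot_ne hz h2
      omega
  have hray := lintegral_ray P hC1 (rayExt z n q) n z K hstep hfresh
  have hpr : ∀ ω : EnvSp d,
      ∏ i ∈ Finset.range n, ENNReal.ofReal (ω.1 (rayExt z n q i) (rayExt z n q (i + 1))) =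
      ∏ i ∈ Finset.range n, ENNReal.ofReal (ω.1 (q i) (q (i + 1))) := by
    intro ω
    refine Finset.prod_congr rfl fun i hi => ?_
    have hi' := Finset.mem_range.1 hi
    rw [rayExt_agree z n q i (by omega), rayExt_agree z n q (i + 1) (by omega)]
  simp only [hpr] at hray
  rw [if_pos hq0, one_mul, one_mul, hray, mul_comm]

/-- The key quenched estimate at visits to a fixed site `x`. -/
lemma hkey_qu (hκ : IsQuenched κ) (ω : EnvSp d) (x z : Zd d) (K : ℕ) :
    ∀ n (q : Traj d), q n = x →
      (κ 0) ω (cylN (n + K) (rayExt z n q)) =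
        (∏ j ∈ Finset.range K, ENNReal.ofReal (ω.1 (x + j • z) (x + (j + 1) • z))) *
          (κ 0) ω (cylN n q) := by
  intro n q hqn
  have h1 : (κ 0) ω (cylN (n + K) (rayExt z n q)) =
      (if rayExt z n q 0 = 0 then 1 else 0) *
        ∏ i ∈ Finset.range (n + K), ENNReal.ofReal (ω.1 (rayExt z n q i) (rayExt z n q (i + 1))) :=
    hκ 0 ω (n + K) _
  have h2 : (κ 0) ω (cylN n q) =
      (if q 0 = 0 then 1 else 0) *
        ∏ i ∈ Finset.range n, ENNReal.ofReal (ω.1 (q i) (q (i + 1))) :=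
    hκ 0 ω n q
  rw [h1, h2, rayExt_agree z n q 0 (Nat.zero_le n), Finset.prod_range_add]
  have hfst : ∀ i ∈ Finset.range n,
      ENNReal.ofReal (ω.1 (rayExt z n q i) (rayExt z n q (i + 1))) =
      ENNReal.ofReal (ω.1 (q i) (q (i + 1))) := by
    intro i hi
    have hi' := Finset.mem_range.1 hi
    rw [rayExt_agree z n q i (by omega), rayExt_agree z n q (i+1) (by omega)]
  have hsnd : ∀ j ∈ Finset.range K,
      ENNReal.ofReal (ω.1 (rayExt z n q (n + j)) (rayExt z n q (n + j + 1))) =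
      ENNReal.ofReal (ω.1 (x + j • z) (x + (j + 1) • z)) := by
    intro j hj
    rw [show n + j + 1 = n + (j + 1) by omega, rayExt_at, rayExt_at, hqn]
  rw [Finset.prod_congr rfl hfst, Finset.prod_congr rfl hsnd]
  ring

/-- Target event class for the trial lemma. -/
def TSset (G : ℕ → Traj d → Prop) (z : Zd d) (K : ℕ) : Set (Traj d) :=
  {X | (∀ m, ∃ n, m ≤ n ∧ G n X) ∧ ∀ n, G n X → ¬ SuccP z K n X}

lemma TSset_meas {G : ℕ → Traj d → Prop} (hGm : ∀ n, MeasurableSet {X : Traj d | G n X})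
    (z : Zd d) (K : ℕ) : MeasurableSet (TSset G z K) := by
  have : TSset G z K =
      (⋂ (m : ℕ), ⋃ (n : ℕ) (_ : m ≤ n), {X : Traj d | G n X}) ∩
      (⋂ (n : ℕ), ({X : Traj d | G n X} ∩ {X : Traj d | SuccP z K n X})ᶜ) := by
    ext X
    simp only [TSset, Set.mem_setOf_eq, Set.mem_inter_iff, Set.mem_iInter, Set.mem_iUnion,
      Set.mem_compl_iff]
    constructor
    · rintro ⟨h1, h2⟩
      exact ⟨fun m => by obtain ⟨n, hn1, hn2⟩ := h1 m; exact ⟨n, hn1, hn2⟩,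
        fun n hn => hn.2 |> (h2 n hn.1)⟩
    · rintro ⟨h1, h2⟩
      refine ⟨fun m => by obtain ⟨n, hn1, hn2⟩ := h1 m; exact ⟨n, hn1, hn2⟩,
        fun n hG hS => h2 n ⟨hG, hS⟩⟩
  rw [this]
  refine (MeasurableSet.iInter fun m => MeasurableSet.iUnion fun n =>
    MeasurableSet.iUnion fun _ => hGm n).inter
    (MeasurableSet.iInter fun n => ((hGm n).inter (measurableSet_succ z K n)).compl)

lemma prob_one_ae {f : EnvSp d → ℝ} (hf : Measurable f) (h1 : P {ω | 0 < f ω} = 1) :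
    ∀ᵐ ω ∂P, 0 < f ω := by
  rw [MeasureTheory.ae_iff]
  have hms : MeasurableSet {ω : EnvSp d | 0 < f ω} := measurableSet_lt measurable_const hf
  have hc : P {ω : EnvSp d | 0 < f ω}ᶜ = 0 := by
    rw [measure_compl hms (measure_ne_top P _), h1]
    simp
  rw [show {a : EnvSp d | ¬ 0 < f a} = {ω : EnvSp d | 0 < f ω}ᶜ from by ext; simp]
  exact hc

lemma measurable_entry_real (u v : Zd d) : Measurable (fun ω : EnvSp d => ω.1 u v) :=
  ((measurable_pi_apply (X := fun _ : Zd d => ℝ) v).comp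
    ((measurable_pi_apply (X := fun _ : Zd d => Zd d → ℝ) u).comp measurable_subtype_coe))

lemma ae_all_pos (hC1 : CondC1 P) (z : Zd d) (hzpos : P {ω : EnvSp d | 0 < ω.1 0 z} = 1) :
    ∀ᵐ ω ∂P, ∀ y : Zd d, 0 < ω.1 y (y + z) := by
  rw [MeasureTheory.ae_all_iff]
  intro y
  refine prob_one_ae P (measurable_entry_real y (y + z)) ?_
  have hφ : Measurable (fun v : Zd d → ℝ => v z) :=
    measurable_pi_apply (X := fun _ : Zd d => ℝ) z
  have hid : IdentDistrib (fun ω : EnvSp d => ω.1 y (y + z))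
      (fun ω : EnvSp d => ω.1 0 (0 + z)) P P := (hC1.2 y).comp hφ
  have h2 : P {ω : EnvSp d | 0 < ω.1 y (y + z)} = P {ω : EnvSp d | 0 < ω.1 0 (0 + z)} :=
    hid.measure_mem_eq (measurableSet_Ioi (a := (0 : ℝ)))
  rw [h2]
  rw [show {ω : EnvSp d | 0 < ω.1 0 (0 + z)} = {ω : EnvSp d | 0 < ω.1 0 z} from by
    simp only [zero_add]]
  exact hzpos

/-- Visiting a fixed site infinitely often while never following the ray is null. -/
lemma TSx_null (hκ : IsQuenched κ) (hC1 : CondC1 P) (x z : Zd d) (K : ℕ)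
    (hzpos : P {ω : EnvSp d | 0 < ω.1 0 z} = 1) :
    ann P κ 0 (TSset (fun n (X : Traj d) => X n = x) z K) = 0 := by
  have hGm : ∀ n, MeasurableSet {X : Traj d | X n = x} := by
    intro n
    have : {X : Traj d | X n = x} = {X : Traj d | X n ∈ ({x} : Set (Zd d))} := by ext; simp
    rw [this]; exact measurable_coord n _
  have hTSm := TSset_meas hGm z K
  rw [ann, Measure.bind_apply hTSm (κ 0).measurable.aemeasurable]
  have hae : ∀ᵐ ω ∂P, (κ 0) ω (TSset (fun n (X : Traj d) => X n = x) z K) = 0 := by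
    filter_upwards [ae_all_pos P hC1 z hzpos] with ω hω
    refine absBC (G := fun n (X : Traj d) => X n = x) (K := K) ((κ 0) ω)
      (fun s => prob_le_one) ?_ z
      (∏ j ∈ Finset.range K, ENNReal.ofReal (ω.1 (x + j • z) (x + (j + 1) • z))) ?_ ?_
    · intro n X Y hag h
      rw [← hag n (le_refl n)]; exact h
    · rw [Finset.prod_ne_zero_iff]
      intro j _
      have h1 := hω (x + j • z)
      rw [show x + j • z + z = x + (j + 1) • z from by rw [succ_nsmul, add_assoc]] at h1
      exact ne_of_gt (ENNReal.ofReal_pos.2 h1)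
    · intro n q hq
      exact hkey_qu κ hκ ω x z K n q hq
  calc ∫⁻ ω, (κ 0) ω (TSset (fun n (X : Traj d) => X n = x) z K) ∂P
      = ∫⁻ _, 0 ∂P := lintegral_congr_ae hae
    _ = 0 := lintegral_zero

end SlabAux
namespace SlabAux

open scoped ENNReal

set_option linter.unusedSectionVars false

variable {d : ℕ}

lemma inf_exists_ge {s : Set ℕ} (hs : s.Infinite) (m : ℕ) : ∃ n, m ≤ n ∧ n ∈ s := by
  obtain ⟨n, hn, hlt⟩ := hs.exists_gt m
  exact ⟨n, le_of_lt hlt, hn⟩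

lemma io_infinite {p : ℕ → Prop} (h : ∀ m, ∃ n, m ≤ n ∧ p n) : {n | p n}.Infinite := by
  by_contra hfin
  rw [Set.not_infinite] at hfin
  obtain ⟨M, hM⟩ := hfin.bddAbove
  obtain ⟨n, hn1, hn2⟩ := h (M + 1)
  have : n ≤ M := hM hn2
  omega

/-- The deterministic containment: a trajectory staying above level `a` and visiting
levels `≤ b` infinitely often either visits some low site infinitely often, or has
infinitely many good (fresh, low, with fresh ray) times. -/
lemma det_contain (ℓ : EuclideanSpace ℝ (Fin d)) (a b : ℝ) (z : Zd d) (hz : dotl z ℓ < 0)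
    (K : ℕ) (X : Traj d)
    (hlow : ∀ n, a ≤ dotl (X n) ℓ) (hio : {n | dotl (X n) ℓ ≤ b}.Infinite) :
    (∃ x : Zd d, dotl x ℓ ≤ b + -(dotl z ℓ) ∧ {n | X n = x}.Infinite) ∨
      (∀ m, ∃ n, m ≤ n ∧ GoodD ℓ (b + -(dotl z ℓ)) z K n X) := by
  classical
  set δ := -(dotl z ℓ) with hδdef
  have hδ : 0 < δ := by rw [hδdef]; linarith
  set lvl := fun n => dotl (X n) ℓ with hlvl
  set S := {c : ℝ | {n | lvl n ≤ c}.Infinite} with hS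
  have hbS : b ∈ S := hio
  have hlb : ∀ c ∈ S, a ≤ c := by
    intro c hc
    obtain ⟨n, hn⟩ := hc.nonempty
    exact le_trans (hlow n) hn
  have hbdd : BddBelow S := ⟨a, hlb⟩
  set L := sInf S with hL
  have haL : a ≤ L := le_csInf ⟨b, hbS⟩ hlb
  have hLb : L ≤ b := csInf_le hbdd hbS
  set η := δ / 4 with hη
  have hηpos : 0 < η := by positivity
  have claim1 : {n | lvl n ≤ L - η}.Finite := by
    by_contra hinf
    have hmem : L - η ∈ S := hinf
    have := csInf_le hbdd hmem
    rw [← hL] at this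
    linarith
  obtain ⟨c, hcS, hc⟩ : ∃ c ∈ S, c < L + η := by
    refine (csInf_lt_iff hbdd ⟨b, hbS⟩).1 ?_
    rw [← hL]; linarith
  set T' := {n | lvl n ≤ c} \ {n | lvl n ≤ L - η} with hT'def
  have hT' : T'.Infinite := (hcS : {n | lvl n ≤ c}.Infinite).diff claim1
  by_cases himg : (X '' T').Finite
  · -- some site is visited infinitely often
    left
    have hexists : ∃ y ∈ X '' T', {n | n ∈ T' ∧ X n = y}.Infinite := by
      by_contra hno
      push_neg at hno
      have hsub : T' ⊆ ⋃ y ∈ X '' T', {n | n ∈ T' ∧ X n = y} := by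
        intro n hn
        exact Set.mem_biUnion ⟨n, hn, rfl⟩ ⟨hn, rfl⟩
      have : T'.Finite := Set.Finite.subset
        (Set.Finite.biUnion himg (fun y hy => (hno y hy))) hsub
      exact hT' this
    obtain ⟨y, hy, hfib⟩ := hexists
    refine ⟨y, ?_, hfib.mono (fun n hn => hn.2)⟩
    obtain ⟨n, hn, hXn⟩ := hy
    rw [← hXn]
    have h1 : lvl n ≤ c := hn.1
    have : lvl n ≤ b + δ := by rw [hη] at hc; linarith
    exact this
  · right
    have himg' : (X '' T').Infinite := himg
    set Bad := X '' {n | lvl n ≤ L - η} with hBadDef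
    have hBad : Bad.Finite := claim1.image X
    set Bs : Set (Zd d) := ⋃ j ∈ Set.Icc 1 K, (fun y => y - j • z) '' Bad with hBsDef
    have hBs : Bs.Finite := Set.Finite.biUnion (Set.finite_Icc 1 K) (fun j _ => hBad.image _)
    set GO := (X '' T') \ Bs with hGODef
    have hGO : GO.Infinite := himg'.diff hBs
    set FVT := {n | X n ∈ GO ∧ ∀ i < n, X i ≠ X n} with hFVTDef
    have hFVT : FVT.Infinite := by
      by_contra hfin
      rw [Set.not_infinite] at hfin
      have hsub : GO ⊆ X '' FVT := by
        intro x hx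
        have hex : ∃ n, X n = x := by
          obtain ⟨n, _, h⟩ := hx.1
          exact ⟨n, h⟩
        refine ⟨Nat.find hex, ⟨?_, ?_⟩, Nat.find_spec hex⟩
        · rw [Nat.find_spec hex]; exact hx
        · intro i hi heq
          rw [Nat.find_spec hex] at heq
          exact Nat.find_min hex hi heq
      exact hGO (Set.Finite.subset (hfin.image X) hsub)
    intro m
    obtain ⟨n, hmn, hnF⟩ := inf_exists_ge hFVT m
    obtain ⟨hGOn, hfreshn⟩ := hnF
    have hlevn : dotl (X n) ℓ < L + η := by
      obtain ⟨n₀, hn₀, hXn₀⟩ := hGOn.1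
      have h1 : lvl n₀ ≤ c := hn₀.1
      have : dotl (X n) ℓ = lvl n₀ := by rw [hlvl, ← hXn₀]
      linarith
    refine ⟨n, hmn, ?_, hfreshn, ?_⟩
    · calc dotl (X n) ℓ ≤ L + η := le_of_lt hlevn
        _ ≤ b + δ := by rw [hη]; linarith
    · intro j hj1 hj2 i hi heq
      have hlevi : lvl i ≤ L - η := by
        have h1 : dotl (X i) ℓ = dotl (X n) ℓ + (j : ℝ) * dotl z ℓ := by
          rw [heq, dotl_add, dotl_nsmul]
        have h2 : (j : ℝ) * dotl z ℓ ≤ 1 * dotl z ℓ := by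
          refine mul_le_mul_of_nonpos_right ?_ (le_of_lt hz)
          exact_mod_cast hj1
        have : dotl (X i) ℓ ≤ L + η - δ := by
          rw [h1]
          have : (1 : ℝ) * dotl z ℓ = -δ := by rw [hδdef]; ring
          linarith
        rw [hlvl]
        rw [hη] at *
        linarith
      have hXiBad : X i ∈ Bad := ⟨i, hlevi, rfl⟩
      have hXnBs : X n ∈ Bs := by
        refine Set.mem_biUnion (show j ∈ Set.Icc 1 K from ⟨hj1, hj2⟩) ?_
        refine ⟨X i, hXiBad, ?_⟩
        show X i - j • z = X n
        rw [heq, add_sub_cancel_right]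
      exact hGOn.2 hXnBs

end SlabAux
namespace SlabAux

open scoped ENNReal

set_option linter.unusedSectionVars false

variable {d : ℕ}
variable (P : Measure (EnvSp d)) [IsProbabilityMeasure P]
variable (κ : Zd d → Kernel (EnvSp d) (Traj d)) [∀ x, IsMarkovKernel (κ x)]

lemma ann_le_one (s : Set (Traj d)) : ann P κ 0 s ≤ 1 := by
  have huniv : ann P κ 0 Set.univ = 1 := by
    rw [ann, Measure.bind_apply MeasurableSet.univ (κ 0).measurable.aemeasurable]
    have : ∀ ω : EnvSp d, (κ 0) ω Set.univ = 1 := fun ω => measure_univ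
    rw [lintegral_congr this, lintegral_one, measure_univ]
  exact le_trans (measure_mono (Set.subset_univ s)) (le_of_eq huniv)

/-- Master lemma: staying above level `a` while visiting levels `≤ b` infinitely often
is null under the annealed law. -/
lemma master (hκ : IsQuenched κ) (hC1 : CondC1 P) (ℓ : EuclideanSpace ℝ (Fin d)) (z : Zd d)
    (hz : dotl z ℓ < 0) (hzpos : P {ω : EnvSp d | 0 < ω.1 0 z} = 1) (a b : ℝ) :
    ann P κ 0 {X : Traj d | (∀ n, a ≤ dotl (X n) ℓ) ∧ {n | dotl (X n) ℓ ≤ b}.Infinite} = 0 := by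
  classical
  set δ := -(dotl z ℓ) with hδdef
  have hδ : 0 < δ := by rw [hδdef]; linarith
  obtain ⟨K, hK1, hKd⟩ : ∃ K : ℕ, 1 ≤ K ∧ b + δ - K * δ < a := by
    refine ⟨⌈(b - a) / δ⌉₊ + 2, by omega, ?_⟩
    have h1 : (b - a) / δ ≤ (⌈(b - a) / δ⌉₊ : ℝ) := Nat.le_ceil _
    have h2 : b - a ≤ (⌈(b - a) / δ⌉₊ : ℝ) * δ := by
      rw [div_le_iff₀ hδ] at h1; exact h1
    push_cast
    nlinarith
  set b' := b + δ with hb'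
  have hN1 : ann P κ 0 (TSset (GoodD ℓ b' z K) z K) = 0 := by
    refine absBC (G := GoodD ℓ b' z K) (K := K) (ann P κ 0) (ann_le_one P κ)
      (GoodD_det ℓ b' z K) z ((eps P z) ^ K)
      (pow_ne_zero K (eps_pos P z hzpos)) ?_
    exact hkey_ann P κ hκ hC1 ℓ b' z hz K
  have hN2 : ann P κ 0 (⋃ x : Zd d, TSset (fun n (X : Traj d) => X n = x) z K) = 0 :=
    measure_iUnion_null (fun x => TSx_null P κ hκ hC1 x z K hzpos)
  refine measure_mono_null ?_ (measure_union_null hN1 hN2)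
  rintro X ⟨hlow, hio⟩
  rcases det_contain ℓ a b z hz K X hlow hio with ⟨x, hxlev, hxio⟩ | hGio
  · right
    refine Set.mem_iUnion.2 ⟨x, ?_, ?_⟩
    · intro m
      obtain ⟨n, h1, h2⟩ := inf_exists_ge hxio m
      exact ⟨n, h1, h2⟩
    · intro n hxn hS
      have hXnK := hS K hK1 (le_refl K)
      have hlev : dotl (X (n + K)) ℓ = dotl (X n) ℓ - K * δ := by
        rw [hXnK, dotl_add, dotl_nsmul, hδdef]; ring
      have h1 := hlow (n + K)
      rw [hlev, hxn] at h1
      linarith [hδdef, hxlev]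
  · left
    refine ⟨hGio, ?_⟩
    intro n hG hS
    have hXnK := hS K hK1 (le_refl K)
    have hlev : dotl (X (n + K)) ℓ = dotl (X n) ℓ - K * δ := by
      rw [hXnK, dotl_add, dotl_nsmul, hδdef]; ring
    have h1 := hlow (n + K)
    have h2 : dotl (X n) ℓ ≤ b' := hG.1
    rw [hlev] at h1
    linarith [hδdef, hb', h2]

end SlabAux
namespace SlabAux

open scoped ENNReal

set_option linter.unusedSectionVars false

variable {d : ℕ}
variable (P : Measure (EnvSp d)) [IsProbabilityMeasure P]

lemma dotl_list_sum (ℓ : EuclideanSpace ℝ (Fin d)) :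
    ∀ l : List (Zd d), dotl l.sum ℓ = (l.map (fun y => dotl y ℓ)).sum := by
  intro l
  induction l with
  | nil =>
    simp only [List.sum_nil, List.map_nil]
    simp [dotl]
  | cons hd tl ih =>
    simp only [List.sum_cons, List.map_cons, dotl_add, ih]

/-- From (C3), for every nonzero `ℓ` there is a step `z` with a.s. positive probability
and `dotl z ℓ < 0`. -/
lemma exists_dir (hC3 : CondC3 P) (ℓ : EuclideanSpace ℝ (Fin d)) (hne : ℓ ≠ 0) :
    ∃ z : Zd d, dotl z ℓ < 0 ∧ P {ω : EnvSp d | 0 < ω.1 0 z} = 1 := by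
  classical
  obtain ⟨N, hNcl, hNpos⟩ := hC3
  have hex : ∃ i : Fin d, ℓ i ≠ 0 := by
    by_contra h
    push_neg at h
    exact hne (PiLp.ext h)
  obtain ⟨i, hi⟩ := hex
  set cZ : ℤ := if 0 < ℓ i then -1 else 1 with hcZ
  set v : Zd d := Pi.single i cZ with hv
  have hdv : dotl v ℓ = (cZ : ℝ) * ℓ i := by
    rw [dotl]
    rw [Finset.sum_eq_single i]
    · rw [hv, Pi.single_eq_same]
    · intro j _ hji
      rw [hv, Pi.single_eq_of_ne hji]
      simp
    · intro h
      exact absurd (Finset.mem_univ i) h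
  have hdvneg : dotl v ℓ < 0 := by
    rw [hdv, hcZ]
    rcases lt_trichotomy (ℓ i) 0 with h | h | h
    · rw [if_neg (by linarith)]
      push_cast
      linarith
    · exact absurd h hi
    · rw [if_pos h]
      push_cast
      linarith
  have hvmem : v ∈ AddSubmonoid.closure N := by
    rw [hNcl]
    exact AddSubmonoid.mem_top v
  obtain ⟨l, hlN, hlsum⟩ := AddSubmonoid.exists_list_of_mem_closure hvmem
  have hlsum' : (l.map (fun y => dotl y ℓ)).sum < 0 := by
    rw [← dotl_list_sum, hlsum]
    exact hdvneg
  have hzex : ∃ y ∈ l, dotl y ℓ < 0 := by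
    by_contra h
    push_neg at h
    have : (0 : ℝ) ≤ (l.map (fun y => dotl y ℓ)).sum := by
      refine List.sum_nonneg ?_
      intro r hr
      obtain ⟨y, hy, rfl⟩ := List.mem_map.1 hr
      exact h y hy
    linarith
  obtain ⟨y, hyl, hyneg⟩ := hzex
  exact ⟨y, hyneg, hNpos y (hlN y hyl)⟩

end SlabAux
/-- Slab lemma (bounded-jump version of Zerner–Merkl Lemma 4): `P⁰`-a.s., it is
impossible to visit the slab `{x : a ≤ x · ℓ ≤ b}` infinitely often without visiting
both neighboring half-spaces. -/
theorem slab_lemma {d : ℕ}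
    (P : Measure (EnvSp d)) [IsProbabilityMeasure P]
    (κ : Zd d → Kernel (EnvSp d) (Traj d)) [∀ x, IsMarkovKernel (κ x)]
    (hκ : IsQuenched κ)
    (hC1 : CondC1 P) (R : ℝ) (hC2 : CondC2 P R) (hC3 : CondC3 P)
    (ℓ : EuclideanSpace ℝ (Fin d)) (hℓ : ‖ℓ‖ = 1)
    (a b : ℝ) (hab : a ≤ b) :
    ann P κ 0 {X | (∃ᶠ n in atTop, dotl (X n) ℓ ∈ Set.Icc a b) ∧
      ¬ ((∃ n, dotl (X n) ℓ < a) ∧ ∃ m, b < dotl (X m) ℓ)} = 0 := by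
  classical
  have hl0 : ℓ ≠ 0 := by
    intro h
    rw [h] at hℓ
    simp at hℓ
  obtain ⟨z₀, hz₀, hp₀⟩ := SlabAux.exists_dir P hC3 ℓ hl0
  obtain ⟨z₁, hz₁, hp₁⟩ := SlabAux.exists_dir P hC3 (-ℓ) (neg_ne_zero.2 hl0)
  have hM1 := SlabAux.master P κ hκ hC1 ℓ z₀ hz₀ hp₀ a b
  have hM2 := SlabAux.master P κ hκ hC1 (-ℓ) z₁ hz₁ hp₁ (-b) (-a)
  refine measure_mono_null ?_ (measure_union_null hM1 hM2)
  rintro X ⟨hfreq, hnot⟩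
  have hinf : {n | dotl (X n) ℓ ∈ Set.Icc a b}.Infinite := by
    refine SlabAux.io_infinite (fun m => ?_)
    obtain ⟨n, h1, h2⟩ := (Filter.frequently_atTop.1 hfreq) m
    exact ⟨n, h1, h2⟩
  rw [not_and_or] at hnot
  rcases hnot with h | h
  · left
    push_neg at h
    exact ⟨h, hinf.mono (fun n hn => hn.2)⟩
  · right
    push_neg at h
    refine ⟨fun n => ?_, ?_⟩
    · rw [SlabAux.dotl_neg]
      have := h n
      linarith
    · refine hinf.mono (fun n hn => ?_)
      show dotl (X n) (-ℓ) ≤ -a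
      rw [SlabAux.dotl_neg]
      have := hn.1
      linarith
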